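/- If t is a jump point of g (i.e., g(t⁺) ≠ g(t)) and g̃ is the variation function of g, then liminf_{s→t⁺} |(g(s)-g(t))/(g̃(s)-g̃(t))| = |Δ⁺g(t)|/Δ⁺g̃(t) = 1. In particular the condition φ > 0 of the everywhere FTC automatically holds at jump points, and if g is nondecreasing then φ ≡ 1 on [a,b]. -/

import Mathlib

open Set Filter MeasureTheory Topology
open scoped Classical

/-- Total variation of `g` on the interval `[a,b]`. -/
noncomputable def varOn (g : ℝ → ℝ) (a b : ℝ) : ℝ := (eVariationOn g (Set.Icc a b)).toReal

/-- `g` is left-continuous at every point. -/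
def LeftCont (g : ℝ → ℝ) : Prop := ∀ t : ℝ, ContinuousWithinAt g (Set.Iio t) t

/-- `g` has locally bounded variation. -/
def LocBV (g : ℝ → ℝ) : Prop := ∀ a b : ℝ, BoundedVariationOn g (Set.Icc a b)

/-- The variation function `g̃` of `g`. -/
noncomputable def varFun (g : ℝ → ℝ) (t : ℝ) : ℝ :=
  if 0 ≤ t then g 0 + varOn g 0 t else g 0 - varOn g t 0

/-- Jump (discontinuity) points of a left-continuous `g`. -/
def Dg (g : ℝ → ℝ) : Set ℝ := {t | ¬ ContinuousWithinAt g (Set.Ioi t) t}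

/-- Interiors of constancy intervals of `g`. -/
def Cg (g : ℝ → ℝ) : Set ℝ :=
  {t | ∃ ε > 0, ∀ s ∈ Set.Ioo (t - ε) (t + ε), g s = g t}

/-- Left endpoints of constancy components of `g` which are not jump points. -/
def Ngm (g : ℝ → ℝ) : Set ℝ :=
  {t | t ∉ Dg g ∧ t ∉ Cg g ∧ ∃ ε > 0, ∀ s ∈ Set.Ioo t (t + ε), g s = g t}

/-- Right endpoints of constancy components of `g` which are not jump points. -/
def Ngp (g : ℝ → ℝ) : Set ℝ :=
  {t | t ∉ Dg g ∧ t ∉ Cg g ∧ ∃ ε > 0, ∀ s ∈ Set.Ioo (t - ε) t, g s = g t}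

/-- The point `t*`: `t` itself, unless `t` lies in the interior of a constancy interval,
in which case it is the right endpoint of that constancy component. -/
noncomputable def tStar (g : ℝ → ℝ) (t : ℝ) : ℝ :=
  if t ∈ Cg g then sSup {s | t ≤ s ∧ ∀ u ∈ Set.Icc t s, g u = g t} else t

/-- Stieltjes derivative of `F` w.r.t. a possibly non-monotonic derivator `g`. -/
def HasStieltjesDerivAt (g F : ℝ → ℝ) (t d : ℝ) : Prop :=
  (t ∈ Dg g →
    Tendsto (fun s => (F s - F t) / (g s - g t)) (nhdsWithin t (Set.Ioi t)) (nhds d)) ∧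
  (t ∉ Dg g →
    Tendsto (fun s => (F s - F (tStar g t)) / (g s - g (tStar g t)))
      (nhdsWithin (tStar g t) {s | g s ≠ g (tStar g t)}) (nhds d))

/-- `f` is `g`-continuous on `[a,b]` (w.r.t. the pseudometric `|g̃ s - g̃ t|`). -/
def GCont (g f : ℝ → ℝ) (a b : ℝ) : Prop :=
  ∀ t ∈ Set.Icc a b, ∀ ε > 0, ∃ δ > 0, ∀ s ∈ Set.Icc a b,
    |varFun g s - varFun g t| < δ → |f s - f t| < ε

/-- `F` is `g`-absolutely continuous on `[a,b]`. -/
def GAC (g F : ℝ → ℝ) (a b : ℝ) : Prop :=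
  ∀ ε > 0, ∃ δ > 0, ∀ n : ℕ, ∀ c d : ℕ → ℝ,
    (∀ i < n, a ≤ c i ∧ c i < d i ∧ d i ≤ b) →
    (∀ i < n, ∀ j < n, i ≠ j → Disjoint (Set.Ioo (c i) (d i)) (Set.Ioo (c j) (d j))) →
    (∑ i ∈ Finset.range n, varOn g (c i) (d i)) < δ →
    (∑ i ∈ Finset.range n, |F (d i) - F (c i)|) < ε

/-- Integral of `f` over `s` with respect to a signed measure `μ`. -/
noncomputable def sInt (μ : MeasureTheory.SignedMeasure ℝ) (f : ℝ → ℝ) (s : Set ℝ) : ℝ :=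
  (∫ x in s, f x ∂μ.toJordanDecomposition.posPart) -
    (∫ x in s, f x ∂μ.toJordanDecomposition.negPart)

/-- The function `φ` of the everywhere version of the FTC. -/
noncomputable def phi (g : ℝ → ℝ) (t : ℝ) : ℝ :=
  if t ∈ Ngm g then
    Filter.liminf (fun s => |(g s - g t) / (varFun g s - varFun g t)|)
      (nhdsWithin t (Set.Iio t))
  else if t ∈ Dg g ∪ Cg g ∪ Ngp g then
    Filter.liminf (fun s => |(g s - g (tStar g t)) / (varFun g s - varFun g (tStar g t))|)
      (nhdsWithin (tStar g t) (Set.Ioi (tStar g t)))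
  else
    Filter.liminf (fun s => |(g s - g t) / (varFun g s - varFun g t)|)
      (nhdsWithin t {t}ᶜ)

section Helpers

variable {g : ℝ → ℝ}

lemma varOn_nonneg (g : ℝ → ℝ) (a b : ℝ) : 0 ≤ varOn g a b := ENNReal.toReal_nonneg

lemma varOn_add (hbv : LocBV g) {a b c : ℝ} (hab : a ≤ b) (hbc : b ≤ c) :
    varOn g a b + varOn g b c = varOn g a c := by
  have h := eVariationOn.Icc_add_Icc g (s := Set.univ) hab hbc (Set.mem_univ b)
  simp only [Set.univ_inter] at h
  rw [varOn, varOn, varOn, ← h, ENNReal.toReal_add (hbv a b) (hbv b c)]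

lemma abs_sub_le_varOn (hbv : LocBV g) {a b x y : ℝ} (hx : x ∈ Set.Icc a b)
    (hy : y ∈ Set.Icc a b) : |g x - g y| ≤ varOn g a b := by
  have := (hbv a b).dist_le hx hy
  rwa [Real.dist_eq] at this

lemma varFun_sub (hbv : LocBV g) {t s : ℝ} (hts : t ≤ s) :
    varFun g s - varFun g t = varOn g t s := by
  rcases le_or_gt 0 t with h0t | h0t
  · rw [varFun, varFun, if_pos (h0t.trans hts), if_pos h0t]
    have := varOn_add hbv h0t hts
    linarith
  · rcases le_or_gt 0 s with h0s | h0s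
    · rw [varFun, varFun, if_pos h0s, if_neg (not_le.2 h0t)]
      have := varOn_add hbv h0t.le h0s
      linarith
    · rw [varFun, varFun, if_neg (not_le.2 h0s), if_neg (not_le.2 h0t)]
      have := varOn_add hbv hts h0s.le
      linarith

lemma varOn_monotone (hg : Monotone g) {a b : ℝ} (hab : a ≤ b) : varOn g a b = g b - g a := by
  have h1 : eVariationOn g (Set.Icc a b) ≤ ENNReal.ofReal (g b - g a) := by
    have := (hg.monotoneOn Set.univ).eVariationOn_le (Set.mem_univ a) (Set.mem_univ b)
    simpa using this
  have h2 : ENNReal.ofReal (g b - g a) ≤ eVariationOn g (Set.Icc a b) := by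
    have := eVariationOn.edist_le g (Set.right_mem_Icc.2 hab) (Set.left_mem_Icc.2 hab)
    rwa [edist_dist, Real.dist_eq, abs_of_nonneg (sub_nonneg.2 (hg hab))] at this
  rw [varOn, le_antisymm h1 h2, ENNReal.toReal_ofReal (sub_nonneg.2 (hg hab))]

lemma varFun_eq_of_monotone (hg : Monotone g) : varFun g = g := by
  funext x
  rcases le_or_gt 0 x with h | h
  · rw [varFun, if_pos h, varOn_monotone hg h]; ring
  · rw [varFun, if_neg (not_le.2 h), varOn_monotone hg h.le]; ring

lemma exists_split (hbv : LocBV g) {t s ε : ℝ} (hts : t < s) (hε : 0 < ε) :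
    ∃ w ∈ Set.Ioc t s, varOn g t s ≤ |g w - g t| + varOn g w s + ε := by
  set V := eVariationOn g (Set.Icc t s) with hV
  have hVtop : V ≠ ⊤ := hbv t s
  by_cases hV0 : V = 0
  · refine ⟨s, ⟨hts, le_rfl⟩, ?_⟩
    have : varOn g t s = 0 := by rw [varOn, ← hV, hV0, ENNReal.toReal_zero]
    rw [this]
    have := varOn_nonneg g s s
    have := abs_nonneg (g s - g t)
    linarith
  · have hne : ENNReal.ofReal ε ≠ 0 := by
      simp only [ne_eq, ENNReal.ofReal_eq_zero, not_le]; exact hε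
    have hsub : V - ENNReal.ofReal ε < V := ENNReal.sub_lt_self hVtop hV0 hne
    have hsup : V - ENNReal.ofReal ε <
        ⨆ p : ℕ × { u : ℕ → ℝ // Monotone u ∧ ∀ i, u i ∈ Set.Icc t s },
          ∑ i ∈ Finset.range p.1, edist (g (p.2.1 (i + 1))) (g (p.2.1 i)) := hsub
    obtain ⟨⟨n, u, hu, hus⟩, hp⟩ := lt_iSup_iff.mp hsup
    simp only at hp
    have hVle : V ≤ (∑ i ∈ Finset.range n, edist (g (u (i + 1))) (g (u i)))
        + ENNReal.ofReal ε := tsub_le_iff_right.mp hp.le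
    by_cases hex : ∃ i, t < u i
    · set j := Nat.find hex with hj
      have hjspec : t < u j := Nat.find_spec hex
      have hueq : ∀ i < j, u i = t := fun i hi =>
        le_antisymm (not_lt.mp (Nat.find_min hex hi)) (hus i).1
      set w := u j with hw
      refine ⟨w, ⟨hjspec, (hus j).2⟩, ?_⟩
      set v : ℕ → ℝ := fun i => max (u i) w with hv
      have hvmono : Monotone v := fun i k hik => max_le_max (hu hik) le_rfl
      have hvmem : ∀ i, v i ∈ Set.Icc w s :=
        fun i => ⟨le_max_right _ _, max_le (hus i).2 (hus j).2⟩
      have hvsum := eVariationOn.sum_le (f := g) (n := n) hvmono hvmem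
      have hterm : ∀ i ∈ Finset.range n, edist (g (u (i + 1))) (g (u i)) ≤
          edist (g (v (i + 1))) (g (v i)) + (if i + 1 = j then edist (g w) (g t) else 0) := by
        intro i _
        rcases lt_trichotomy (i + 1) j with h | h | h
        · rw [if_neg h.ne, hueq _ h, hueq _ (lt_of_le_of_lt (Nat.le_succ i) h)]
          simp
        · have hui : u i = t := hueq i (by omega)
          have hvi : v i = w := by
            rw [hv]; simp only [hui]; exact max_eq_right hjspec.le
          have hvi1 : v (i + 1) = w := by
            rw [hv]; simp only [h]; exact max_eq_left le_rfl
          rw [if_pos h, hui, hvi, hvi1, h]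
          simp [edist_self]
          exact le_rfl
        · have hi : j ≤ i := by omega
          have hwi : w ≤ u i := hu hi
          have h1 : v i = u i := max_eq_left hwi
          have h2 : v (i + 1) = u (i + 1) := max_eq_left (hwi.trans (hu (Nat.le_succ i)))
          rw [if_neg (by omega), h1, h2, add_zero]
      have hitesum : (∑ i ∈ Finset.range n, if i + 1 = j then edist (g w) (g t) else 0)
          ≤ edist (g w) (g t) := by
        rcases Nat.eq_zero_or_pos j with hj0 | hjpos
        · simp [hj0]
        · obtain ⟨m, hm⟩ := Nat.exists_eq_succ_of_ne_zero hjpos.ne'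
          have hcond : ∀ i : ℕ, (i + 1 = j) = (i = m) := fun i => by rw [hm]; simp
          simp only [hcond]
          rw [Finset.sum_ite_eq' (Finset.range n) m (fun _ => edist (g w) (g t))]
          split <;> simp
      have hsum : (∑ i ∈ Finset.range n, edist (g (u (i + 1))) (g (u i))) ≤
          eVariationOn g (Set.Icc w s) + edist (g w) (g t) :=
        calc (∑ i ∈ Finset.range n, edist (g (u (i + 1))) (g (u i)))
            ≤ ∑ i ∈ Finset.range n, (edist (g (v (i + 1))) (g (v i))
              + if i + 1 = j then edist (g w) (g t) else 0) := Finset.sum_le_sum hterm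
          _ = (∑ i ∈ Finset.range n, edist (g (v (i + 1))) (g (v i)))
              + ∑ i ∈ Finset.range n, (if i + 1 = j then edist (g w) (g t) else 0) :=
            Finset.sum_add_distrib
          _ ≤ eVariationOn g (Set.Icc w s) + edist (g w) (g t) := add_le_add hvsum hitesum
      have hfin : eVariationOn g (Set.Icc w s) ≠ ⊤ := hbv w s
      have hle : V ≤ eVariationOn g (Set.Icc w s) + ENNReal.ofReal |g w - g t|
          + ENNReal.ofReal ε := by
        refine hVle.trans (add_le_add ?_ le_rfl)
        rwa [edist_dist, Real.dist_eq] at hsum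
      have hmono := ENNReal.toReal_mono (by
        refine ENNReal.add_ne_top.2 ⟨ENNReal.add_ne_top.2 ⟨hfin, ENNReal.ofReal_ne_top⟩,
          ENNReal.ofReal_ne_top⟩) hle
      rw [ENNReal.toReal_add (ENNReal.add_ne_top.2 ⟨hfin, ENNReal.ofReal_ne_top⟩)
          ENNReal.ofReal_ne_top, ENNReal.toReal_add hfin ENNReal.ofReal_ne_top,
          ENNReal.toReal_ofReal (abs_nonneg _), ENNReal.toReal_ofReal hε.le] at hmono
      rw [varOn, ← hV]
      rw [varOn]
      linarith
    · push_neg at hex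
      have hzero : ∀ i, u i = t := fun i => le_antisymm (hex i) (hus i).1
      have hsum0 : (∑ i ∈ Finset.range n, edist (g (u (i + 1))) (g (u i))) = 0 := by
        apply Finset.sum_eq_zero
        intro i _
        rw [hzero (i + 1), hzero i, edist_self]
      rw [hsum0, zero_add] at hVle
      refine ⟨s, ⟨hts, le_rfl⟩, ?_⟩
      have h1 : varOn g t s ≤ ε := by
        have := ENNReal.toReal_mono ENNReal.ofReal_ne_top hVle
        rwa [ENNReal.toReal_ofReal hε.le] at this
      have := varOn_nonneg g s s
      have := abs_nonneg (g s - g t)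
      linarith

end Helpers

section Jump

variable {g : ℝ → ℝ}

lemma varOn_tendsto (hbv : LocBV g) {t L' : ℝ}
    (hL' : Tendsto (varFun g) (nhdsWithin t (Set.Ioi t)) (nhds L')) :
    Tendsto (fun s => varOn g t s) (nhdsWithin t (Set.Ioi t)) (nhds (L' - varFun g t)) := by
  refine (hL'.sub_const (varFun g t)).congr' ?_
  filter_upwards [self_mem_nhdsWithin] with s hs
  exact varFun_sub hbv (le_of_lt hs)

lemma jump_eq (hbv : LocBV g) {t L L' : ℝ}
    (hL : Tendsto g (nhdsWithin t (Set.Ioi t)) (nhds L))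
    (hL' : Tendsto (varFun g) (nhdsWithin t (Set.Ioi t)) (nhds L')) :
    L' - varFun g t = |L - g t| := by
  set D := L' - varFun g t with hD
  have hVtend := varOn_tendsto hbv hL'
  have hlow : |L - g t| ≤ D := by
    have h1 : Tendsto (fun s => |g s - g t|) (nhdsWithin t (Set.Ioi t)) (nhds |L - g t|) :=
      (hL.sub_const (g t)).abs
    refine le_of_tendsto_of_tendsto h1 hVtend ?_
    filter_upwards [self_mem_nhdsWithin] with s hs
    exact abs_sub_le_varOn hbv (Set.right_mem_Icc.2 hs.le) (Set.left_mem_Icc.2 hs.le)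
  have hDle : ∀ w, t < w → D ≤ varOn g t w := by
    intro w hw
    refine le_of_tendsto hVtend ?_
    filter_upwards [Ioo_mem_nhdsGT_of_mem (Set.left_mem_Ico.2 hw)] with s hs
    have hadd := varOn_add hbv hs.1.le hs.2.le
    have := varOn_nonneg g s w
    linarith
  have hup : D ≤ |L - g t| := by
    refine le_of_forall_pos_le_add ?_
    intro ε hε
    have hev : {s | dist (g s) L < ε / 2} ∈ nhdsWithin t (Set.Ioi t) :=
      hL (Metric.ball_mem_nhds L (half_pos hε))
    obtain ⟨s, hs, hsub⟩ := mem_nhdsGT_iff_exists_Ioc_subset.mp hev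
    obtain ⟨w, hw, hkey⟩ := exists_split hbv hs (half_pos hε)
    have hdw : |g w - L| < ε / 2 := by
      have := hsub hw
      rwa [Set.mem_setOf_eq, Real.dist_eq] at this
    have hadd := varOn_add hbv hw.1.le hw.2
    have h1 : D ≤ varOn g t w := hDle w hw.1
    have h2 : |g w - g t| ≤ |g w - L| + |L - g t| := by
      have := abs_sub_le (g w) L (g t)
      linarith [this]
    linarith
  exact le_antisymm hup hlow

lemma jump_main (hbv : LocBV g) {t L L' : ℝ}
    (hL : Tendsto g (nhdsWithin t (Set.Ioi t)) (nhds L))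
    (hL' : Tendsto (varFun g) (nhdsWithin t (Set.Ioi t)) (nhds L'))
    (hjump : L ≠ g t) :
    Filter.liminf (fun s => |(g s - g t) / (varFun g s - varFun g t)|)
        (nhdsWithin t (Set.Ioi t)) = |L - g t| / (L' - varFun g t) ∧
      |L - g t| / (L' - varFun g t) = 1 := by
  have hD := jump_eq hbv hL hL'
  have habs : 0 < |L - g t| := abs_pos.2 (sub_ne_zero.2 hjump)
  have h2 : |L - g t| / (L' - varFun g t) = 1 := by
    rw [hD]; exact div_self habs.ne'
  refine ⟨?_, h2⟩
  have htend : Tendsto (fun s => |(g s - g t) / (varFun g s - varFun g t)|)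
      (nhdsWithin t (Set.Ioi t)) (nhds (|L - g t| / (L' - varFun g t))) := by
    have hd : Tendsto (fun s => varFun g s - varFun g t) (nhdsWithin t (Set.Ioi t))
        (nhds (L' - varFun g t)) := hL'.sub_const _
    have hn : Tendsto (fun s => g s - g t) (nhdsWithin t (Set.Ioi t)) (nhds (L - g t)) :=
      hL.sub_const _
    have h3 := (hn.div hd (by rw [hD]; exact habs.ne')).abs
    have h4 : |(L - g t) / (L' - varFun g t)| = |L - g t| / (L' - varFun g t) := by
      rw [hD, abs_div, abs_abs]
    rwa [h4] at h3
  exact htend.liminf_eq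

end Jump

/-- At a jump point, `liminf_{s→t⁺} |(g s - g t)/(g̃ s - g̃ t)| = |Δ⁺g(t)|/Δ⁺g̃(t) = 1`;
moreover if `g` is nondecreasing then `φ ≡ 1` on `[a,b]`. -/
theorem stmt15 (g : ℝ → ℝ) (hlc : LeftCont g) (hbv : LocBV g) (t L L' : ℝ)
    (hL : Tendsto g (nhdsWithin t (Set.Ioi t)) (nhds L))
    (hL' : Tendsto (varFun g) (nhdsWithin t (Set.Ioi t)) (nhds L'))
    (hjump : L ≠ g t) :
    (Filter.liminf (fun s => |(g s - g t) / (varFun g s - varFun g t)|)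
        (nhdsWithin t (Set.Ioi t)) = |L - g t| / (L' - varFun g t) ∧
      |L - g t| / (L' - varFun g t) = 1) ∧
    (∀ a b : ℝ, a < b → a ∉ Ngm g → b ∉ Cg g ∪ Ngp g ∪ Dg g → Monotone g →
      ∀ u ∈ Set.Icc a b, phi g u = 1) := by
  constructor
  · exact jump_main hbv hL hL' hjump
  · intro a b hab ha hb hg u hu
    have hvf : varFun g = g := varFun_eq_of_monotone hg
    have key : ∀ (x : ℝ) (l : Filter ℝ), l.NeBot → (∀ᶠ s in l, g s ≠ g x) →
        Filter.liminf (fun s => |(g s - g x) / (varFun g s - varFun g x)|) l = 1 := by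
      intro x l hl hev
      haveI := hl
      have h1 : ∀ᶠ s in l, |(g s - g x) / (varFun g s - varFun g x)| = (1 : ℝ) := by
        filter_upwards [hev] with s hs
        rw [hvf, div_self (sub_ne_zero.2 hs), abs_one]
      rw [liminf_congr h1]
      exact liminf_const 1
    by_cases h1 : u ∈ Ngm g
    · simp only [phi, if_pos h1]
      obtain ⟨hnd, hnc, ε₀, hε₀, hcr⟩ := h1
      have hne : ∀ᶠ s in nhdsWithin u (Set.Iio u), g s ≠ g u := by
        filter_upwards [self_mem_nhdsWithin] with s hs hgs
        apply hnc
        refine ⟨min (u - s) ε₀, lt_min (sub_pos.2 hs) hε₀, ?_⟩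
        intro v hv
        rcases lt_trichotomy v u with h | h | h
        · have hsv : s ≤ v := by
            have := min_le_left (u - s) ε₀
            have := hv.1
            simp only [Set.mem_Ioo] at hv
            linarith [hv.1]
          refine le_antisymm (hg h.le) ?_
          rw [← hgs]; exact hg hsv
        · rw [h]
        · refine hcr v ⟨h, ?_⟩
          have := min_le_right (u - s) ε₀
          have := hv.2
          linarith
      exact key u _ inferInstance hne
    · by_cases h2 : u ∈ Dg g ∪ Cg g ∪ Ngp g
      · simp only [phi, if_neg h1, if_pos h2]
        rcases h2 with (hD | hC) | hN
        · -- jump point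
          have hnc : u ∉ Cg g := by
            intro hC'
            obtain ⟨ε, hε, hc⟩ := hC'
            apply hD
            have hev : ∀ᶠ s in nhdsWithin u (Set.Ioi u), g s = g u := by
              filter_upwards [Ioo_mem_nhdsGT_of_mem
                (Set.left_mem_Ico.2 (by linarith : u < u + ε))] with s hs
              exact hc s ⟨by linarith [hs.1], hs.2⟩
            exact Tendsto.congr' (by filter_upwards [hev] with s hs using hs.symm)
              tendsto_const_nhds
          have htS : tStar g u = u := by simp only [tStar, if_neg hnc]
          rw [htS]
          have hL := hg.tendsto_nhdsGT u
          have hjp : sInf (g '' Set.Ioi u) ≠ g u := by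
            intro h
            have hLt : Tendsto g (nhdsWithin u (Set.Ioi u)) (nhds (g u)) := by
              rw [← h]; exact hL
            exact hD hLt
          have hL' : Tendsto (varFun g) (nhdsWithin u (Set.Ioi u))
              (nhds (sInf (g '' Set.Ioi u))) := by rw [hvf]; exact hL
          have hm := jump_main hbv hL hL' hjp
          exact hm.1.trans hm.2
        · -- interior of constancy interval
          simp only [tStar, if_pos hC]
          set S := {s : ℝ | u ≤ s ∧ ∀ v ∈ Set.Icc u s, g v = g u} with hS
          have hC' := hC
          obtain ⟨ε, hε, hc⟩ := hC'
          have hmemS : u + ε / 2 ∈ S := by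
            refine ⟨by linarith, fun v hv => ?_⟩
            exact hc v ⟨by linarith [hv.1], by linarith [hv.2]⟩
          have hub : u < b := by
            rcases eq_or_lt_of_le hu.2 with h | h
            · exact absurd (Or.inl (Or.inl (h ▸ hC)) : b ∈ Cg g ∪ Ngp g ∪ Dg g) hb
            · exact h
          have hbddS : BddAbove S := by
            refine ⟨b, fun s hs => ?_⟩
            by_contra hsb
            push_neg at hsb
            apply hb
            left; left
            refine ⟨min (b - u) (s - b), lt_min (by linarith) (by linarith), ?_⟩
            intro v hv
            have hv1 : u ≤ v := by
              have := min_le_left (b - u) (s - b); have := hv.1; linarith [hv.1]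
            have hv2 : v ≤ s := by
              have := min_le_right (b - u) (s - b); linarith [hv.2]
            have hgb : g b = g u := hs.2 b ⟨hu.2, hsb.le⟩
            rw [hgb]
            exact hs.2 v ⟨hv1, hv2⟩
          have huw : u + ε / 2 ≤ sSup S := le_csSup hbddS hmemS
          have huw' : u < sSup S := by linarith
          have hconst : ∀ v ∈ Set.Ico u (sSup S), g v = g u := by
            intro v hv
            obtain ⟨s', hs'S, hvs'⟩ := exists_lt_of_lt_csSup ⟨u + ε / 2, hmemS⟩ hv.2
            exact hs'S.2 v ⟨hv.1, hvs'.le⟩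
          have hgw : g (sSup S) = g u := by
            have hh1 : Tendsto g (nhdsWithin (sSup S) (Set.Iio (sSup S)))
                (nhds (g (sSup S))) := hlc (sSup S)
            have hh2 : Tendsto g (nhdsWithin (sSup S) (Set.Iio (sSup S))) (nhds (g u)) := by
              refine Tendsto.congr' ?_ tendsto_const_nhds
              filter_upwards [Ioo_mem_nhdsLT_of_mem (Set.right_mem_Ioc.2 huw')] with v hv
              exact (hconst v ⟨hv.1.le, hv.2⟩).symm
            exact tendsto_nhds_unique hh1 hh2
          have hne : ∀ᶠ s in nhdsWithin (sSup S) (Set.Ioi (sSup S)), g s ≠ g (sSup S) := by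
            filter_upwards [self_mem_nhdsWithin] with s hs hgs
            have hws : sSup S < s := hs
            have hsS : s ∈ S := by
              refine ⟨by linarith, fun v hv => ?_⟩
              exact le_antisymm (le_trans (hg hv.2) (le_of_eq (hgs.trans hgw))) (hg hv.1)
            exact absurd (le_csSup hbddS hsS) (not_le.2 hws)
          exact key (sSup S) _ inferInstance hne
        · -- right endpoint of constancy component
          have h := hN
          obtain ⟨hnd, hnc, ε, hε, hcl⟩ := h
          have htS : tStar g u = u := by simp only [tStar, if_neg hnc]
          rw [htS]
          have hne : ∀ᶠ s in nhdsWithin u (Set.Ioi u), g s ≠ g u := by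
            filter_upwards [self_mem_nhdsWithin] with s hs hgs
            have hus : u < s := hs
            apply hnc
            refine ⟨min ε (s - u), lt_min hε (by linarith), ?_⟩
            intro v hv
            rcases lt_trichotomy v u with h | h | h
            · refine hcl v ⟨?_, h⟩
              have := min_le_left ε (s - u); linarith [hv.1]
            · rw [h]
            · have hvs : v ≤ s := by
                have := min_le_right ε (s - u); linarith [hv.2]
              exact le_antisymm (le_trans (hg hvs) (le_of_eq hgs)) (hg h.le)
          exact key u _ inferInstance hne
      · simp only [phi, if_neg h1, if_neg h2]
        have hnd : u ∉ Dg g := fun h => h2 (Or.inl (Or.inl h))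
        have hnc : u ∉ Cg g := fun h => h2 (Or.inl (Or.inr h))
        have hnb : Filter.NeBot (nhdsWithin u {u}ᶜ) := by
          refine Filter.neBot_of_le (f := nhdsWithin u (Set.Iio u))
            (nhdsWithin_mono u fun x hx => ?_)
          exact ne_of_lt hx
        have hne : ∀ᶠ s in nhdsWithin u {u}ᶜ, g s ≠ g u := by
          filter_upwards [self_mem_nhdsWithin] with s hs hgs
          rcases lt_or_gt_of_ne (hs : s ≠ u) with h | h
          · apply h2
            right
            refine ⟨hnd, hnc, u - s, by linarith, fun v hv => ?_⟩
            refine le_antisymm (hg hv.2.le) ?_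
            rw [← hgs]
            exact hg (by linarith [hv.1] : s ≤ v)
          · apply h1
            refine ⟨hnd, hnc, s - u, by linarith, fun v hv => ?_⟩
            refine le_antisymm ?_ (hg hv.1.le)
            exact le_trans (hg (by linarith [hv.2] : v ≤ s)) (le_of_eq hgs)
        exact key u _ hnb hne
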